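/- Let (K,∂) be a differential field of characteristic 0 whose field of constants C is algebraically closed, and assume K itself is algebraically closed. Let (𝒦,∂) be a differential field extension of K with the same field of constants C. Let y_1,…,y_n ∈ 𝒦^× be such that a_i := ∂y_i/y_i ∈ K for every i. If for every (m_1,…,m_n) ∈ ℤ^n \ {0} the element m_1a_1 + ⋯ + m_na_n does not lie in ∂ℓn(K^×), then y_1,…,y_n are algebraically independent over K; equivalently, the transcendence degree of K(y_1,…,y_n) over K equals n. (Kolchin's theorem on 𝔾_m^n, §2 item 1.) -/

import Mathlib

section KolchinAux
variable {𝒦 : Type*} [Field 𝒦] {D : 𝒦 → 𝒦}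

theorem kolchin_aux_D0 (hadd : ∀ a b : 𝒦, D (a + b) = D a + D b) : D 0 = 0 := by
  have h : D 0 = D 0 + D 0 := by simpa using hadd 0 0
  exact (left_eq_add.mp h)

theorem kolchin_aux_D1 (hmul : ∀ a b : 𝒦, D (a * b) = a * D b + D a * b) : D 1 = 0 := by
  have h : D 1 = D 1 + D 1 := by simpa using hmul 1 1
  exact (left_eq_add.mp h)

theorem kolchin_aux_Dsum (hadd : ∀ a b : 𝒦, D (a + b) = D a + D b)
    {ι : Type*} (s : Finset ι) (f : ι → 𝒦) :
    D (∑ i ∈ s, f i) = ∑ i ∈ s, D (f i) := by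
  classical
  induction s using Finset.cons_induction with
  | empty => simpa using kolchin_aux_D0 hadd
  | cons j s hj ih => rw [Finset.sum_cons, Finset.sum_cons, hadd, ih]

theorem kolchin_aux_Dinv (hmul : ∀ a b : 𝒦, D (a * b) = a * D b + D a * b)
    (x : 𝒦) (hx : x ≠ 0) : D x⁻¹ = -(D x) / x ^ 2 := by
  have h : D (x * x⁻¹) = x * D x⁻¹ + D x * x⁻¹ := hmul x x⁻¹
  rw [mul_inv_cancel₀ hx, kolchin_aux_D1 hmul] at h
  field_simp at h ⊢
  linear_combination -h

theorem kolchin_aux_Dpow (hmul : ∀ a b : 𝒦, D (a * b) = a * D b + D a * b)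
    (x : 𝒦) (k : ℕ) : D (x ^ k) * x = k * D x * x ^ k := by
  induction k with
  | zero => simp [kolchin_aux_D1 hmul]
  | succ k ih =>
    have h : D (x ^ (k+1)) = x * D (x ^ k) + D x * x ^ k := by
      rw [pow_succ, mul_comm (x ^ k) x]; exact hmul x (x ^ k)
    push_cast
    linear_combination x * h + x * ih

theorem kolchin_aux_Dzpow (hmul : ∀ a b : 𝒦, D (a * b) = a * D b + D a * b)
    (x : 𝒦) (hx : x ≠ 0) (k : ℤ) : D (x ^ k) = (k : 𝒦) * (D x / x) * x ^ k := by
  induction k using Int.rec with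
  | ofNat k =>
    have := kolchin_aux_Dpow hmul x k
    rw [Int.ofNat_eq_coe, zpow_natCast]
    push_cast
    field_simp
    linear_combination this
  | negSucc k =>
    have hp := kolchin_aux_Dpow hmul x (k+1)
    have hxk : x ^ (k+1) ≠ 0 := pow_ne_zero _ hx
    have hi := kolchin_aux_Dinv hmul (x ^ (k+1)) hxk
    have h2 : (((k:𝒦)+1) * D x * x ^ k) * x = ((k:𝒦)+1) * D x * x ^ (k+1) := by ring
    have hp' : D (x ^ (k+1)) * x = ((k:𝒦)+1) * D x * x ^ (k+1) := by
      rw [hp]; push_cast; ring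
    have hDP : D (x ^ (k+1)) = ((k:𝒦)+1) * D x * x ^ k :=
      mul_right_cancel₀ hx (hp'.trans h2.symm)
    rw [zpow_negSucc, hi, hDP]
    push_cast
    field_simp
    ring

theorem kolchin_aux_Dprod (hadd : ∀ a b : 𝒦, D (a + b) = D a + D b)
    (hmul : ∀ a b : 𝒦, D (a * b) = a * D b + D a * b)
    {ι : Type*} (s : Finset ι) (f : ι → 𝒦) (hf : ∀ i ∈ s, f i ≠ 0) :
    D (∏ i ∈ s, f i) = (∑ i ∈ s, D (f i) / f i) * ∏ i ∈ s, f i := by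
  classical
  induction s using Finset.cons_induction with
  | empty => simpa using kolchin_aux_D1 hmul
  | cons j s hj ih =>
    have hfj : f j ≠ 0 := hf j (Finset.mem_cons_self _ _)
    have hP : (∏ i ∈ s, f i) ≠ 0 :=
      Finset.prod_ne_zero_iff.mpr fun i hi => hf i (Finset.mem_cons_of_mem hi)
    have ih' := ih (fun i hi => hf i (Finset.mem_cons_of_mem hi))
    rw [Finset.prod_cons, Finset.sum_cons, hmul, ih']
    field_simp
    ring

end KolchinAux

/-- **Kolchin's theorem on 𝔾ₘⁿ** (§2, item 1).
Let `(𝒦, D)` be a differential field of characteristic zero, `K` a subfield stable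
under the derivation `D`, with `K` algebraically closed, and let `C` be the common
field of constants of `𝒦` (and of `K`), assumed algebraically closed and contained
in `K`.  If `y₁, …, yₙ ∈ 𝒦ˣ` satisfy `aᵢ := D yᵢ / yᵢ ∈ K` and for every nonzero
integer vector `(m₁, …, mₙ)` the combination `m₁a₁ + ⋯ + mₙaₙ` is not a logarithmic
derivative `D u / u` of an element `u ∈ Kˣ`, then `y₁, …, yₙ` are algebraically
independent over `K` (equivalently, `trdeg K(y₁,…,yₙ)/K = n`). -/
theorem kolchin_theorem_on_Gm_n
    (𝒦 : Type*) [Field 𝒦] [CharZero 𝒦]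
    (D : 𝒦 → 𝒦)
    (hadd : ∀ a b : 𝒦, D (a + b) = D a + D b)
    (hmul : ∀ a b : 𝒦, D (a * b) = a * D b + D a * b)
    -- the base field K, a differential subfield, algebraically closed
    (K : Subfield 𝒦) (hDK : ∀ x ∈ K, D x ∈ K) (hKac : IsAlgClosed K)
    -- the field of constants C of 𝒦, contained in K (so that K and 𝒦 have the
    -- same field of constants), algebraically closed
    (C : Subfield 𝒦) (hC : ∀ x : 𝒦, D x = 0 ↔ x ∈ C)
    (hCK : C ≤ K) (hCac : IsAlgClosed C)
    -- the data
    (n : ℕ) (y : Fin n → 𝒦ˣ) (a : Fin n → 𝒦)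
    (ha : ∀ i, a i = D (y i) / (y i : 𝒦))
    (haK : ∀ i, a i ∈ K)
    -- non-degeneracy: no nonzero integer combination of the aᵢ is a logarithmic
    -- derivative of an element of K^×
    (hnd : ∀ m : Fin n → ℤ, m ≠ 0 →
      ¬ ∃ u : 𝒦, u ∈ K ∧ u ≠ 0 ∧ (∑ i, (m i : 𝒦) * a i) = D u / u) :
    AlgebraicIndependent K (fun i => (y i : 𝒦)) := by
  classical
  have hy0 : ∀ i, (y i : 𝒦) ≠ 0 := fun i => (y i).ne_zero
  set Y : (Fin n → ℤ) → 𝒦 := fun m => ∏ i, (y i : 𝒦) ^ (m i) with hYdef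
  have hY0 : ∀ m, Y m ≠ 0 := fun m =>
    Finset.prod_ne_zero_iff.mpr fun i _ => zpow_ne_zero _ (hy0 i)
  have hDY : ∀ m, D (Y m) = (∑ i, (m i : 𝒦) * a i) * Y m := by
    intro m
    rw [hYdef]
    rw [kolchin_aux_Dprod hadd hmul _ _ (fun i _ => zpow_ne_zero _ (hy0 i))]
    congr 1
    refine Finset.sum_congr rfl fun i _ => ?_
    rw [kolchin_aux_Dzpow hmul _ (hy0 i) (m i), ha i,
      mul_div_assoc, div_self (zpow_ne_zero _ (hy0 i)), mul_one]
  have hYsub : ∀ m k : Fin n → ℤ, Y (m - k) = Y m / Y k := by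
    intro m k
    rw [hYdef, ← Finset.prod_div_distrib]
    refine Finset.prod_congr rfl fun i _ => ?_
    rw [Pi.sub_apply, zpow_sub₀ (hy0 i)]
  have key : ∀ N : ℕ, ∀ S : Finset (Fin n → ℤ), S.card = N → S.Nonempty →
      ∀ c : (Fin n → ℤ) → 𝒦, (∀ m ∈ S, c m ∈ K) → (∀ m ∈ S, c m ≠ 0) →
      (∑ m ∈ S, c m * Y m) = 0 → False := by
    intro N
    induction N using Nat.strong_induction_on with
    | _ N IH =>
    intro S hcard hne c hcK hc0 hrel
    obtain ⟨m₀, hm₀⟩ := hne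
    by_cases h1 : S.card = 1
    · obtain ⟨m, hm⟩ := Finset.card_eq_one.mp h1
      rw [hm, Finset.sum_singleton] at hrel
      have hmS : m ∈ S := by rw [hm]; exact Finset.mem_singleton_self m
      exact (mul_ne_zero (hc0 m hmS) (hY0 m)) hrel
    · have hpos : 0 < S.card := Finset.card_pos.mpr ⟨m₀, hm₀⟩
      have h2 : 1 < S.card := by omega
      set d : (Fin n → ℤ) → 𝒦 := fun m => c m / c m₀ with hd
      have hdm₀ : d m₀ = 1 := div_self (hc0 m₀ hm₀)
      have hrel2 : ∑ m ∈ S, d m * Y (m - m₀) = 0 := by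
        have heq : ∑ m ∈ S, d m * Y (m - m₀) = (∑ m ∈ S, c m * Y m) / (c m₀ * Y m₀) := by
          rw [Finset.sum_div]
          refine Finset.sum_congr rfl fun m _ => ?_
          rw [hYsub, hd]
          field_simp
        rw [heq, hrel, zero_div]
      set e : (Fin n → ℤ) → 𝒦 :=
        fun m => D (d m) + (∑ i, (((m - m₀) i : ℤ) : 𝒦) * a i) * d m with he
      have hrel3 : ∑ m ∈ S, e m * Y (m - m₀) = 0 := by
        have h := congrArg D hrel2
        rw [kolchin_aux_Dsum hadd, kolchin_aux_D0 hadd] at h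
        rw [← h]
        refine Finset.sum_congr rfl fun m _ => ?_
        rw [hmul, hDY, he]
        ring
      have hem₀ : e m₀ = 0 := by
        rw [he]
        simp [hdm₀, kolchin_aux_D1 hmul]
      set S' := S.filter (fun m => e m ≠ 0) with hS'
      have hrel4 : ∑ m ∈ S', e m * Y (m - m₀) = 0 := by
        rw [hS', Finset.sum_filter_of_ne (fun m _ hne0 => by
          intro h0; exact hne0 (by rw [h0, zero_mul]))]
        exact hrel3
      by_cases hS'ne : S'.Nonempty
      · have hinj : Function.Injective (fun m : Fin n → ℤ => m - m₀) := by
          intro u v h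
          have := congrArg (· + m₀) h
          simpa using this
        set T := S'.image (fun m => m - m₀) with hT
        set c' : (Fin n → ℤ) → 𝒦 := fun k => e (k + m₀) with hc'
        have hsum : ∑ k ∈ T, c' k * Y k = ∑ m ∈ S', e m * Y (m - m₀) := by
          rw [hT, Finset.sum_image (fun u _ v _ h => hinj h)]
          refine Finset.sum_congr rfl fun m _ => ?_
          rw [hc']
          simp
        have hScard : S'.card < S.card := by
          apply Finset.card_lt_card
          rw [Finset.ssubset_iff_of_subset (Finset.filter_subset _ _)]
          exact ⟨m₀, hm₀, by simp [hS', hem₀]⟩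
        have hTcard : T.card < N := by
          rw [hT, Finset.card_image_of_injective _ hinj]
          omega
        have heK : ∀ m ∈ S, e m ∈ K := by
          intro m hm
          have hdmK : d m ∈ K := K.div_mem (hcK m hm) (hcK m₀ hm₀)
          refine K.add_mem (hDK _ hdmK) (K.mul_mem (K.sum_mem fun i _ => ?_) hdmK)
          exact K.mul_mem (K.intCast_mem _) (haK i)
        refine IH T.card hTcard T rfl (hS'ne.image _) c' ?_ ?_ (hsum.trans hrel4)
        · intro k hk
          obtain ⟨m, hmS', hmk⟩ := Finset.mem_image.mp hk
          rw [hc', ← hmk]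
          simpa using heK m (Finset.mem_of_mem_filter _ hmS')
        · intro k hk
          obtain ⟨m, hmS', hmk⟩ := Finset.mem_image.mp hk
          rw [hc', ← hmk]
          simpa using (Finset.mem_filter.mp hmS').2
      · have hall : ∀ m ∈ S, e m = 0 := by
          intro m hm
          by_contra h
          exact hS'ne ⟨m, Finset.mem_filter.mpr ⟨hm, h⟩⟩
        obtain ⟨m₁, hm₁S, hm₁ne⟩ := Finset.exists_mem_ne h2 m₀
        have hd1 : d m₁ ≠ 0 := div_ne_zero (hc0 m₁ hm₁S) (hc0 m₀ hm₀)
        have he1 : D (d m₁) + (∑ i, (((m₁ - m₀) i : ℤ) : 𝒦) * a i) * d m₁ = 0 := by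
          have := hall m₁ hm₁S
          rwa [he] at this
        have hmne : (m₁ - m₀ : Fin n → ℤ) ≠ 0 := sub_ne_zero.mpr hm₁ne
        refine hnd (m₁ - m₀) hmne
          ⟨(d m₁)⁻¹, K.inv_mem (K.div_mem (hcK _ hm₁S) (hcK _ hm₀)), inv_ne_zero hd1, ?_⟩
        rw [kolchin_aux_Dinv hmul _ hd1, div_inv_eq_mul, div_mul_eq_mul_div,
          eq_div_iff (pow_ne_zero 2 hd1)]
        linear_combination (d m₁) * he1
  rw [algebraicIndependent_iff]
  intro p hp
  by_contra hp0
  have hsupp : p.support.Nonempty := by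
    exact MvPolynomial.support_nonempty.mpr hp0
  set E : (Fin n →₀ ℕ) → (Fin n → ℤ) := fun d i => (d i : ℤ) with hE
  have hEinj : Function.Injective E := by
    intro u v h
    rw [hE] at h
    ext i
    exact Nat.cast_inj.mp (by simpa using congrFun h i : ((u i : ℤ)) = (v i : ℤ))
  set S := p.support.image E with hSdef
  set c : (Fin n → ℤ) → 𝒦 :=
    fun m => algebraMap K 𝒦 (p.coeff (Finsupp.equivFunOnFinite.symm (fun i => (m i).toNat)))
    with hcdef
  have hcE : ∀ dd : Fin n →₀ ℕ, c (E dd) = algebraMap K 𝒦 (p.coeff dd) := by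
    intro dd
    have h1 : (fun i => ((E dd) i).toNat) = ⇑dd := by
      funext i
      simp [hE]
    show algebraMap K 𝒦
      (p.coeff (Finsupp.equivFunOnFinite.symm fun i => ((E dd) i).toNat)) = _
    rw [h1, Finsupp.equivFunOnFinite_symm_coe]
  have hrel : ∑ m ∈ S, c m * Y m = 0 := by
    rw [hSdef, Finset.sum_image (fun u _ v _ h => hEinj h), ← hp,
      MvPolynomial.aeval_def, MvPolynomial.eval₂_eq']
    refine Finset.sum_congr rfl fun dd _ => ?_
    rw [hcE, hYdef]
    congr 1
    refine Finset.prod_congr rfl fun i _ => ?_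
    simp [hE]
  refine key S.card S rfl (hsupp.image _) c ?_ ?_ hrel
  · intro m _
    rw [hcdef]
    exact SetLike.coe_mem _
  · intro m hm
    obtain ⟨dd, hdd, hddm⟩ := Finset.mem_image.mp hm
    rw [← hddm, hcE]
    simpa using MvPolynomial.mem_support_iff.mp hdd
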